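/- Let 0 < α < 1, Δτ > 0, k ∈ ℕ, and let t_j = j·Δτ for j = 0, …, k+1. Let f : [0, t_{k+1}] → ℝ, and let L be the continuous piecewise linear interpolant of f on the nodes t_0, …, t_{k+1} (i.e., L(t_j) = f(t_j) and L is affine on each [t_j, t_{j+1}]). Then the weighted integral of L is given exactly by the product trapezoidal quadrature: ∫₀^{t_{k+1}} (t_{k+1} − s)^{α−1} L(s) ds = ∑_{j=0}^{k+1} c_{j,k+1} f(t_j), where c_{0,k+1} = ((Δτ)^α/(α(α+1))) (k^{α+1} − (k − α)(k+1)^α), c_{j,k+1} = ((Δτ)^α/(α(α+1))) ((k−j+2)^{α+1} + (k−j)^{α+1} − 2(k−j+1)^{α+1}) for 1 ≤ j ≤ k, and c_{k+1,k+1} = (Δτ)^α/(α(α+1)). -/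

import Mathlib

open Real MeasureTheory

/-- The product-trapezoidal quadrature weights `c_{j,k+1}` used to discretize the
Riemann–Liouville-type integral `∫₀^τ (τ−ξ)^(α−1) g(ξ) dξ` on a uniform grid. -/
noncomputable def trapWeight (α Δτ : ℝ) (k j : ℕ) : ℝ :=
  if j = 0 then
    (Δτ ^ α / (α * (α + 1))) *
      ((k : ℝ) ^ (α + 1) - ((k : ℝ) - α) * ((k : ℝ) + 1) ^ α)
  else if j = k + 1 then
    Δτ ^ α / (α * (α + 1))
  else
    (Δτ ^ α / (α * (α + 1))) *
      (((k : ℝ) - (j : ℝ) + 2) ^ (α + 1) + ((k : ℝ) - (j : ℝ)) ^ (α + 1) -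
        2 * ((k : ℝ) - (j : ℝ) + 1) ^ (α + 1))

/-- Auxiliary: `x^(α+1) = x^α * x` for nonnegative `x`. -/
lemma trap_rpow_succ {α : ℝ} (hα : 0 < α) {x : ℝ} (hx : 0 ≤ x) :
    x ^ (α + 1) = x ^ α * x := by
  rcases hx.eq_or_lt with h | h
  · rw [← h]
    rw [Real.zero_rpow (by positivity), mul_zero]
  · rw [Real.rpow_add_one h.ne']

/-- Auxiliary: `x^(α-1) * x = x^α` for nonnegative `x`. -/
lemma trap_rpow_sub_one_mul {α : ℝ} (hα : 0 < α) {x : ℝ} (hx : 0 ≤ x) :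
    x ^ (α - 1) * x = x ^ α := by
  rcases hx.eq_or_lt with h | h
  · rw [← h, mul_zero, Real.zero_rpow hα.ne']
  · rw [← Real.rpow_add_one h.ne', sub_add_cancel]

/-- Per-interval weight attached to the left node. -/
noncomputable def trapP (α m : ℝ) : ℝ :=
  -m * ((m + 1) ^ α - m ^ α) / α + ((m + 1) ^ (α + 1) - m ^ (α + 1)) / (α + 1)

/-- Per-interval weight attached to the right node. -/
noncomputable def trapQ (α m : ℝ) : ℝ :=
  (m + 1) * ((m + 1) ^ α - m ^ α) / α - ((m + 1) ^ (α + 1) - m ^ (α + 1)) / (α + 1)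

lemma trapP_top {α : ℝ} (hα : 0 < α) {m : ℝ} (hm : 0 ≤ m) :
    trapP α m = (m ^ (α + 1) - (m - α) * (m + 1) ^ α) / (α * (α + 1)) := by
  have h1 := trap_rpow_succ hα hm
  have h2 := trap_rpow_succ hα (by linarith : (0:ℝ) ≤ m + 1)
  unfold trapP
  rw [h1, h2]
  have hα' : α ≠ 0 := hα.ne'
  have hα1 : α + 1 ≠ 0 := by positivity
  field_simp
  ring

lemma trapQ_zero {α : ℝ} (hα : 0 < α) : trapQ α 0 = 1 / (α * (α + 1)) := by
  unfold trapQ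
  rw [Real.zero_rpow hα.ne', Real.zero_rpow (by positivity : α + 1 ≠ 0)]
  simp only [zero_add, Real.one_rpow]
  have hα' : α ≠ 0 := hα.ne'
  have hα1 : α + 1 ≠ 0 := by positivity
  field_simp
  ring

lemma trapPQ_mid {α : ℝ} (hα : 0 < α) {m : ℝ} (hm : 0 ≤ m) :
    trapP α m + trapQ α (m + 1) =
      ((m + 2) ^ (α + 1) + m ^ (α + 1) - 2 * (m + 1) ^ (α + 1)) / (α * (α + 1)) := by
  have h1 := trap_rpow_succ hα hm
  have h2 := trap_rpow_succ hα (by linarith : (0:ℝ) ≤ m + 1)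
  have h3 := trap_rpow_succ hα (by linarith : (0:ℝ) ≤ m + 2)
  unfold trapP trapQ
  rw [show m + 1 + 1 = m + 2 from by ring, h1, h2, h3]
  have hα' : α ≠ 0 := hα.ne'
  have hα1 : α + 1 ≠ 0 := by positivity
  field_simp
  ring

/-- The basic weighted integral of an affine function. -/
lemma trap_key {α : ℝ} (hα0 : 0 < α) {Δτ : ℝ} (hΔτ : 0 < Δτ) (m c d : ℝ) (hm : 0 ≤ m) :
    ∫ u in (m * Δτ)..((m + 1) * Δτ), u ^ (α - 1) * (c + d * u) =
      c * (((m + 1) * Δτ) ^ α - (m * Δτ) ^ α) / α +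
        d * (((m + 1) * Δτ) ^ (α + 1) - (m * Δτ) ^ (α + 1)) / (α + 1) := by
  have hm1 : (0:ℝ) ≤ m * Δτ := by positivity
  have hab : m * Δτ ≤ (m + 1) * Δτ := by nlinarith
  have h1 : (-1:ℝ) < α - 1 := by linarith
  have h2 : (-1:ℝ) < α := by linarith
  rw [intervalIntegral.integral_congr (g := fun u => c * u ^ (α - 1) + d * u ^ α) ?_]
  · rw [intervalIntegral.integral_add ((intervalIntegral.intervalIntegrable_rpow' h1).const_mul c)
        ((intervalIntegral.intervalIntegrable_rpow' h2).const_mul d),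
      intervalIntegral.integral_const_mul, intervalIntegral.integral_const_mul,
      integral_rpow (Or.inl h1), integral_rpow (Or.inl h2), sub_add_cancel]
    ring
  · intro u hu
    rw [Set.uIcc_of_le hab] at hu
    have hu0 : 0 ≤ u := le_trans hm1 hu.1
    have h := trap_rpow_sub_one_mul hα0 hu0
    simp only
    linear_combination d * h

/-- The weighted integral of the piecewise linear interpolant `L` of `f` on the
uniform grid `t_j = jΔτ`, `j = 0, …, k+1`, equals the product trapezoidal
quadrature `∑_j c_{j,k+1} f(t_j)`. -/
theorem product_trapezoidal_rule (α Δτ : ℝ) (hα : α ∈ Set.Ioo (0:ℝ) 1)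
    (hΔτ : 0 < Δτ) (k : ℕ) (f L : ℝ → ℝ)
    (hnode : ∀ j : ℕ, j ≤ k + 1 → L ((j : ℝ) * Δτ) = f ((j : ℝ) * Δτ))
    (haffine : ∀ j : ℕ, j ≤ k →
      ∀ s ∈ Set.Icc ((j : ℝ) * Δτ) (((j : ℝ) + 1) * Δτ),
        L s = f ((j : ℝ) * Δτ) +
          (f (((j : ℝ) + 1) * Δτ) - f ((j : ℝ) * Δτ)) * (s - (j : ℝ) * Δτ) / Δτ) :
    ∫ s in (0:ℝ)..(((k : ℝ) + 1) * Δτ),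
        (((k : ℝ) + 1) * Δτ - s) ^ (α - 1) * L s =
      ∑ j ∈ Finset.range (k + 2), trapWeight α Δτ k j * f ((j : ℝ) * Δτ) := by
  obtain ⟨hα0, hα1⟩ := hα
  have hα' : α ≠ 0 := hα0.ne'
  have hαp1 : α + 1 ≠ 0 := by positivity
  set T : ℝ := ((k : ℝ) + 1) * Δτ with hT
  -- integrability on each subinterval
  have hint : ∀ i : ℕ, i < k + 1 →
      IntervalIntegrable (fun s => (T - s) ^ (α - 1) * L s) volume
        ((i : ℝ) * Δτ) (((i : ℝ) + 1) * Δτ) := by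
    intro i hi
    have hik : i ≤ k := Nat.lt_succ_iff.mp hi
    have hab : (i : ℝ) * Δτ ≤ ((i : ℝ) + 1) * Δτ := by nlinarith
    have hg : IntervalIntegrable
        (fun u => u ^ (α - 1) *
          (f ((i : ℝ) * Δτ) + (f (((i : ℝ) + 1) * Δτ) - f ((i : ℝ) * Δτ)) *
            ((T - u) - (i : ℝ) * Δτ) / Δτ)) volume (T - ((i : ℝ) + 1) * Δτ) (T - (i : ℝ) * Δτ) :=
      (intervalIntegral.intervalIntegrable_rpow' (by linarith)).mul_continuousOn
        (Continuous.continuousOn (by fun_prop))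
    have hcomp := (hg.comp_sub_left T).symm
    simp only [sub_sub_cancel] at hcomp
    rw [intervalIntegrable_iff_integrableOn_Ioc_of_le hab] at hcomp ⊢
    refine hcomp.congr_fun (fun s hs => ?_) measurableSet_Ioc
    have hs' : s ∈ Set.Icc ((i : ℝ) * Δτ) (((i : ℝ) + 1) * Δτ) := Set.Ioc_subset_Icc_self hs
    rw [haffine i hik s hs']
  -- value of the integral on each subinterval
  have hpiece : ∀ j : ℕ, j ≤ k →
      ∫ s in ((j : ℝ) * Δτ)..(((j : ℝ) + 1) * Δτ), (T - s) ^ (α - 1) * L s =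
        Δτ ^ α * trapP α ((k : ℝ) - (j : ℝ)) * f ((j : ℝ) * Δτ) +
          Δτ ^ α * trapQ α ((k : ℝ) - (j : ℝ)) * f (((j : ℝ) + 1) * Δτ) := by
    intro j hj
    have hm : (0:ℝ) ≤ (k : ℝ) - (j : ℝ) := by
      have : (j : ℝ) ≤ (k : ℝ) := by exact_mod_cast hj
      linarith
    have hab : (j : ℝ) * Δτ ≤ ((j : ℝ) + 1) * Δτ := by nlinarith
    have step1 : ∫ s in ((j : ℝ) * Δτ)..(((j : ℝ) + 1) * Δτ), (T - s) ^ (α - 1) * L s =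
        ∫ s in ((j : ℝ) * Δτ)..(((j : ℝ) + 1) * Δτ),
          (fun u => u ^ (α - 1) *
            (f ((j : ℝ) * Δτ) + (f (((j : ℝ) + 1) * Δτ) - f ((j : ℝ) * Δτ)) *
              ((T - u) - (j : ℝ) * Δτ) / Δτ)) (T - s) := by
      apply intervalIntegral.integral_congr
      intro s hs
      rw [Set.uIcc_of_le hab] at hs
      simp only
      rw [sub_sub_cancel, haffine j hj s hs]
    rw [step1, intervalIntegral.integral_comp_sub_left
      (fun u => u ^ (α - 1) *
        (f ((j : ℝ) * Δτ) + (f (((j : ℝ) + 1) * Δτ) - f ((j : ℝ) * Δτ)) *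
          ((T - u) - (j : ℝ) * Δτ) / Δτ)) T]
    have e1 : T - ((j : ℝ) + 1) * Δτ = ((k : ℝ) - (j : ℝ)) * Δτ := by rw [hT]; ring
    have e2 : T - (j : ℝ) * Δτ = (((k : ℝ) - (j : ℝ)) + 1) * Δτ := by rw [hT]; ring
    rw [e1, e2]
    have hfun : ∀ u : ℝ, u ^ (α - 1) *
          (f ((j : ℝ) * Δτ) + (f (((j : ℝ) + 1) * Δτ) - f ((j : ℝ) * Δτ)) *
            ((T - u) - (j : ℝ) * Δτ) / Δτ) =
        u ^ (α - 1) *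
          ((f ((j : ℝ) * Δτ) + (f (((j : ℝ) + 1) * Δτ) - f ((j : ℝ) * Δτ)) * ((k : ℝ) - (j : ℝ) + 1)) +
            (-(f (((j : ℝ) + 1) * Δτ) - f ((j : ℝ) * Δτ)) / Δτ) * u) := by
      intro u
      have hin : f ((j : ℝ) * Δτ) + (f (((j : ℝ) + 1) * Δτ) - f ((j : ℝ) * Δτ)) *
            ((T - u) - (j : ℝ) * Δτ) / Δτ =
          (f ((j : ℝ) * Δτ) + (f (((j : ℝ) + 1) * Δτ) - f ((j : ℝ) * Δτ)) * ((k : ℝ) - (j : ℝ) + 1)) +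
            (-(f (((j : ℝ) + 1) * Δτ) - f ((j : ℝ) * Δτ)) / Δτ) * u := by
        rw [hT]
        field_simp
        ring
      rw [hin]
    simp only [hfun]
    rw [trap_key hα0 hΔτ _ _ _ hm]
    have hm1 : (0:ℝ) ≤ (k : ℝ) - (j : ℝ) + 1 := by linarith
    rw [Real.mul_rpow hm1 hΔτ.le, Real.mul_rpow hm hΔτ.le, Real.mul_rpow hm1 hΔτ.le,
      Real.mul_rpow hm hΔτ.le, Real.rpow_add_one hΔτ.ne' α]
    unfold trapP trapQ
    field_simp
    ring
  -- split the integral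
  have hsum := intervalIntegral.sum_integral_adjacent_intervals
    (a := fun i : ℕ => (i : ℝ) * Δτ) (f := fun s => (T - s) ^ (α - 1) * L s)
    (μ := volume) (n := k + 1) ?_
  · have h0 : ((0 : ℕ) : ℝ) * Δτ = (0 : ℝ) := by norm_num
    have hkk : ((k + 1 : ℕ) : ℝ) * Δτ = T := by rw [hT]; push_cast; ring
    beta_reduce at hsum
    rw [h0, hkk] at hsum
    rw [← hsum]
    have hsum2 : ∑ i ∈ Finset.range (k + 1),
        (∫ x in ((i : ℕ) : ℝ) * Δτ..(((i + 1 : ℕ)) : ℝ) * Δτ, (T - x) ^ (α - 1) * L x) =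
        ∑ i ∈ Finset.range (k + 1),
          (Δτ ^ α * trapP α ((k : ℝ) - (i : ℝ)) * f ((i : ℝ) * Δτ) +
            Δτ ^ α * trapQ α ((k : ℝ) - (i : ℝ)) * f (((i : ℝ) + 1) * Δτ)) := by
      refine Finset.sum_congr rfl fun i hi => ?_
      have hik : i ≤ k := Nat.lt_succ_iff.mp (Finset.mem_range.mp hi)
      have ec : (((i + 1 : ℕ)) : ℝ) * Δτ = ((i : ℝ) + 1) * Δτ := by push_cast; ring
      rw [ec]
      exact hpiece i hik
    rw [hsum2, Finset.sum_add_distrib]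
    -- reindex the P-sum
    rw [Finset.sum_range_succ' (fun i : ℕ => Δτ ^ α * trapP α ((k : ℝ) - (i : ℝ)) * f ((i : ℝ) * Δτ))]
    -- peel off the last term of the Q-sum
    rw [Finset.sum_range_succ (fun i : ℕ => Δτ ^ α * trapQ α ((k : ℝ) - (i : ℝ)) * f (((i : ℝ) + 1) * Δτ))]
    -- decompose the RHS
    rw [Finset.sum_range_succ' (fun j : ℕ => trapWeight α Δτ k j * f ((j : ℝ) * Δτ))]
    rw [Finset.sum_range_succ (fun j : ℕ => trapWeight α Δτ k (j + 1) * f (((j + 1 : ℕ) : ℝ) * Δτ))]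
    push_cast
    rw [sub_zero]
    have h0' : Δτ ^ α * trapP α (k : ℝ) = trapWeight α Δτ k 0 := by
      rw [trapP_top hα0 (Nat.cast_nonneg k)]
      unfold trapWeight
      rw [if_pos rfl]
      ring
    have hk' : Δτ ^ α * trapQ α ((k : ℝ) - (k : ℝ)) = trapWeight α Δτ k (k + 1) := by
      rw [sub_self, trapQ_zero hα0]
      unfold trapWeight
      rw [if_neg (Nat.succ_ne_zero k), if_pos rfl]
      ring
    have hmid : ∀ i ∈ Finset.range k,
        Δτ ^ α * trapP α ((k : ℝ) - ((i : ℝ) + 1)) * f (((i : ℝ) + 1) * Δτ) +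
          Δτ ^ α * trapQ α ((k : ℝ) - (i : ℝ)) * f (((i : ℝ) + 1) * Δτ) =
        trapWeight α Δτ k (i + 1) * f (((i : ℝ) + 1) * Δτ) := by
      intro i hi
      have hik : i < k := Finset.mem_range.mp hi
      have hm0 : (0:ℝ) ≤ (k : ℝ) - ((i : ℝ) + 1) := by
        have : (i : ℝ) + 1 ≤ (k : ℝ) := by exact_mod_cast hik
        linarith
      have e : (k : ℝ) - (i : ℝ) = ((k : ℝ) - ((i : ℝ) + 1)) + 1 := by ring
      rw [e]
      have key := trapPQ_mid hα0 hm0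
      unfold trapWeight
      rw [if_neg (Nat.succ_ne_zero i), if_neg (by omega : i + 1 ≠ k + 1)]
      push_cast
      linear_combination (Δτ ^ α * f (((i : ℝ) + 1) * Δτ)) * key
    have hcombine : (∑ i ∈ Finset.range k,
          Δτ ^ α * trapP α ((k : ℝ) - ((i : ℝ) + 1)) * f (((i : ℝ) + 1) * Δτ)) +
        ∑ i ∈ Finset.range k,
          Δτ ^ α * trapQ α ((k : ℝ) - (i : ℝ)) * f (((i : ℝ) + 1) * Δτ) =
        ∑ i ∈ Finset.range k, trapWeight α Δτ k (i + 1) * f (((i : ℝ) + 1) * Δτ) := by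
      rw [← Finset.sum_add_distrib]
      exact Finset.sum_congr rfl hmid
    linear_combination hcombine + f ((0:ℝ) * Δτ) * h0' + f (((k : ℝ) + 1) * Δτ) * hk'
  · intro i hi
    have ec : ((i + 1 : ℕ) : ℝ) * Δτ = ((i : ℝ) + 1) * Δτ := by push_cast; ring
    simpa only [ec] using hint i hi
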